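/- Let h be a 4-dimensional Lie subalgebra of T*su(2) that is degenerate with respect to the canonical bilinear form ⟨u+α, v+β⟩ = α(v) + β(u). Then there exists a Lie algebra automorphism F of su(2) such that T*F(h) = ℝe_1 ⊕ su(2)*, where T*F is the automorphism of T*su(2) given by T*F(u+α) = F(u) + α∘F^{−1}. -/

import Mathlib

section TStarExtension

variable {L : Type*} [LieRing L] [LieAlgebra ℝ L]

/-- The Lie ring structure of the `T*`-extension `T*g = g ⊕ g*` of a real Lie algebra `g`:
`[u + α, v + β] = [u,v] + ad*_u β − ad*_v α`, where `(ad*_u α)(v) = −α([u,v])`.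
(Here `⁅u, β⁆ = ad*_u β` is the coadjoint action of Mathlib's
`Module.Dual.instLieRingModule`, for which `⁅u, β⁆ v = −β ⁅u, v⁆`.) -/
instance tstarLieRing : LieRing (L × Module.Dual ℝ L) where
  bracket x y := (⁅x.1, y.1⁆, ⁅x.1, y.2⁆ - ⁅y.1, x.2⁆)
  add_lie x y z := by
    refine Prod.ext ?_ ?_
    · show ⁅(x + y).1, z.1⁆ = (⁅x.1, z.1⁆ + ⁅y.1, z.1⁆ : L)
      simp [add_lie]
    · show ⁅(x + y).1, z.2⁆ - ⁅z.1, (x + y).2⁆ =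
        (⁅x.1, z.2⁆ - ⁅z.1, x.2⁆) + (⁅y.1, z.2⁆ - ⁅z.1, y.2⁆)
      simp only [Prod.fst_add, Prod.snd_add, add_lie, lie_add]
      abel
  lie_add x y z := by
    refine Prod.ext ?_ ?_
    · show ⁅x.1, (y + z).1⁆ = (⁅x.1, y.1⁆ + ⁅x.1, z.1⁆ : L)
      simp [lie_add]
    · show ⁅x.1, (y + z).2⁆ - ⁅(y + z).1, x.2⁆ =
        (⁅x.1, y.2⁆ - ⁅y.1, x.2⁆) + (⁅x.1, z.2⁆ - ⁅z.1, x.2⁆)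
      simp only [Prod.fst_add, Prod.snd_add, add_lie, lie_add]
      abel
  lie_self x := by
    refine Prod.ext ?_ ?_
    · show ⁅x.1, x.1⁆ = (0 : L)
      simp
    · show ⁅x.1, x.2⁆ - ⁅x.1, x.2⁆ = (0 : Module.Dual ℝ L)
      simp
  leibniz_lie x y z := by
    refine Prod.ext ?_ ?_
    · show ⁅x.1, ⁅y.1, z.1⁆⁆ = (⁅⁅x.1, y.1⁆, z.1⁆ + ⁅y.1, ⁅x.1, z.1⁆⁆ : L)
      exact leibniz_lie _ _ _
    · show ⁅x.1, ⁅y.1, z.2⁆ - ⁅z.1, y.2⁆⁆ - ⁅⁅y.1, z.1⁆, x.2⁆ =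
        (⁅⁅x.1, y.1⁆, z.2⁆ - ⁅z.1, ⁅x.1, y.2⁆ - ⁅y.1, x.2⁆⁆) +
        (⁅y.1, ⁅x.1, z.2⁆ - ⁅z.1, x.2⁆⁆ - ⁅⁅x.1, z.1⁆, y.2⁆)
      simp only [lie_lie, lie_sub]
      abel

/-- The `T*`-extension is a Lie algebra over `ℝ`. -/
noncomputable instance tstarLieAlgebra : LieAlgebra ℝ (L × Module.Dual ℝ L) where
  lie_smul t x y := by
    refine Prod.ext ?_ ?_
    · show ⁅x.1, (t • y).1⁆ = t • ⁅x.1, y.1⁆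
      rw [Prod.smul_fst, lie_smul]
    · show ⁅x.1, (t • y).2⁆ - ⁅(t • y).1, x.2⁆ = t • (⁅x.1, y.2⁆ - ⁅y.1, x.2⁆)
      ext m
      simp only [Prod.smul_fst, Prod.smul_snd, LinearMap.sub_apply, LinearMap.smul_apply,
        Module.Dual.lie_apply, smul_lie, map_smul, smul_eq_mul, smul_sub]
      ring

/-- The canonical invariant bilinear form of the `T*`-extension:
`⟨u + α, v + β⟩ = α(v) + β(u)`. -/
def tstarForm (x y : L × Module.Dual ℝ L) : ℝ := x.2 y.1 + y.2 x.1

end TStarExtension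

/-- For a Lie algebra automorphism `F` of `g`, the induced automorphism
`T*F = (F, (F⁻¹)*)` of the `T*`-extension: `T*F(u + α) = (F u, α ∘ F⁻¹)`. -/
def tstarAut {L : Type*} [LieRing L] [LieAlgebra ℝ L] (F : L ≃ₗ⁅ℝ⁆ L) :
    (L × Module.Dual ℝ L) →ₗ[ℝ] (L × Module.Dual ℝ L) :=
  LinearMap.prodMap F.toLinearEquiv.toLinearMap
    F.symm.toLinearEquiv.toLinearMap.dualMap


open Matrix

lemma dot3_self_eq_zero {u : Fin 3 → ℝ} (h : u ⬝ᵥ u = 0) : u = 0 := by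
  rw [dotProduct, Fin.sum_univ_three] at h
  have h0 : u 0 = 0 := by nlinarith [sq_nonneg (u 0), sq_nonneg (u 1), sq_nonneg (u 2)]
  have h1 : u 1 = 0 := by nlinarith [sq_nonneg (u 0), sq_nonneg (u 1), sq_nonneg (u 2)]
  have h2 : u 2 = 0 := by nlinarith [sq_nonneg (u 0), sq_nonneg (u 1), sq_nonneg (u 2)]
  funext i
  fin_cases i
  · exact h0
  · exact h1
  · exact h2

section su2

variable {L : Type*} [LieRing L] [LieAlgebra ℝ L]
variable (b : Module.Basis (Fin 3) ℝ L)

noncomputable def su2vec (f : Fin 3 → ℝ) : L := f 0 • b 0 + f 1 • b 1 + f 2 • b 2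

lemma su2vec_coords (x : L) : su2vec b (b.equivFun x) = x := by
  have := b.sum_equivFun x
  rw [Fin.sum_univ_three] at this
  simpa [su2vec] using this

lemma coords_su2vec (f : Fin 3 → ℝ) : b.equivFun (su2vec b f) = f := by
  funext j
  simp [su2vec, Module.Basis.equivFun_apply, Finsupp.single_apply]
  fin_cases j <;> simp

variable (h12 : ⁅b 0, b 1⁆ = b 2) (h23 : ⁅b 1, b 2⁆ = b 0) (h31 : ⁅b 2, b 0⁆ = b 1)

include h12 h23 h31 in
lemma su2_bracket (x y : L) :
    ⁅x, y⁆ = su2vec b ((b.equivFun x) ⨯₃ (b.equivFun y)) := by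
  have h21 : ⁅b 1, b 0⁆ = -b 2 := by rw [← lie_skew, h12]
  have h32 : ⁅b 2, b 1⁆ = -b 0 := by rw [← lie_skew, h23]
  have h13 : ⁅b 0, b 2⁆ = -b 1 := by rw [← lie_skew, h31]
  conv_lhs => rw [← su2vec_coords b x, ← su2vec_coords b y]
  set f := b.equivFun x
  set g := b.equivFun y
  simp only [su2vec, cross_apply, add_lie, lie_add, smul_lie, lie_smul, lie_self,
    h12, h23, h31, h21, h32, h13, Matrix.cons_val_zero, Matrix.cons_val_one,
    Matrix.head_cons, Matrix.cons_val_two, Matrix.tail_cons]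
  module

lemma rot_invol_identity (w f : Fin 3 → ℝ) (hw : w ⬝ᵥ w ≠ 0) :
    (2 / (w ⬝ᵥ w) * (((2 / (w ⬝ᵥ w) * (f ⬝ᵥ w)) • w - f) ⬝ᵥ w)) • w
      - ((2 / (w ⬝ᵥ w) * (f ⬝ᵥ w)) • w - f) = f := by
  rw [dotProduct, Fin.sum_univ_three] at hw
  funext i
  simp only [dotProduct, Fin.sum_univ_three, Pi.sub_apply, Pi.smul_apply, smul_eq_mul]
  have hw2 : w 0 ^ 2 + w 1 ^ 2 + w 2 ^ 2 ≠ 0 := by rwa [sq, sq, sq]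
  field_simp
  ring

/-- the linear functional `x ↦ coords(x) ⬝ᵥ w`. -/
noncomputable def rotDot (w : Fin 3 → ℝ) : L →ₗ[ℝ] ℝ where
  toFun x := b.equivFun x ⬝ᵥ w
  map_add' x y := by simp [add_dotProduct]
  map_smul' t x := by simp [smul_dotProduct]

/-- rotation by π about the axis `w` (in coordinates w.r.t. `b`). -/
noncomputable def rotMap (w : Fin 3 → ℝ) : L →ₗ[ℝ] L :=
  (2 / (w ⬝ᵥ w)) • (rotDot b w).smulRight (su2vec b w) - LinearMap.id

lemma coords_rotMap (w : Fin 3 → ℝ) (x : L) :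
    b.equivFun (rotMap b w x) =
      (2 / (w ⬝ᵥ w) * (b.equivFun x ⬝ᵥ w)) • w - b.equivFun x := by
  have h : rotMap b w x = (2 / (w ⬝ᵥ w) * (b.equivFun x ⬝ᵥ w)) • su2vec b w - x := by
    simp [rotMap, rotDot, smul_smul]
  rw [h, map_sub, _root_.map_smul, coords_su2vec]

lemma rotMap_invol (w : Fin 3 → ℝ) (hw : w ⬝ᵥ w ≠ 0) :
    Function.Involutive (rotMap b w) := by
  intro x
  apply b.equivFun.injective
  rw [coords_rotMap, coords_rotMap]
  exact rot_invol_identity w _ hw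

lemma cross3_rot_identity (w f g : Fin 3 → ℝ) (hw : w ⬝ᵥ w ≠ 0) :
    ((2 / (w ⬝ᵥ w) * (f ⬝ᵥ w)) • w - f) ⨯₃ ((2 / (w ⬝ᵥ w) * (g ⬝ᵥ w)) • w - g)
      = (2 / (w ⬝ᵥ w) * ((f ⨯₃ g) ⬝ᵥ w)) • w - f ⨯₃ g := by
  have hw' : w = ![w 0, w 1, w 2] := by simp [← List.ofFn_inj]
  have hf' : f = ![f 0, f 1, f 2] := by simp [← List.ofFn_inj]
  have hg' : g = ![g 0, g 1, g 2] := by simp [← List.ofFn_inj]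
  rw [dotProduct, Fin.sum_univ_three] at hw
  rw [hw', hf', hg']
  set a0 := w 0; set a1 := w 1; set a2 := w 2
  set f0 := f 0; set f1 := f 1; set f2 := f 2
  set g0 := g 0; set g1 := g 1; set g2 := g 2
  have hs : a0 * a0 + a1 * a1 + a2 * a2 ≠ 0 := hw
  funext i
  fin_cases i <;>
    · simp only [cross_apply, dotProduct, Fin.sum_univ_three, Pi.sub_apply,
        Pi.smul_apply, smul_eq_mul, Matrix.cons_val_zero, Matrix.cons_val_one,
        Matrix.head_cons, Matrix.cons_val_two, Matrix.tail_cons, Fin.zero_eta, Fin.mk_one, Fin.reduceFinMk]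
      have hs2 : a0 ^ 2 + a1 ^ 2 + a2 ^ 2 ≠ 0 := by rwa [sq, sq, sq]
      field_simp
      ring

include h12 h23 h31 in
lemma rotMap_lie (w : Fin 3 → ℝ) (hw : w ⬝ᵥ w ≠ 0) (x y : L) :
    rotMap b w ⁅x, y⁆ = ⁅rotMap b w x, rotMap b w y⁆ := by
  apply b.equivFun.injective
  rw [su2_bracket b h12 h23 h31 (rotMap b w x) (rotMap b w y), coords_su2vec,
    coords_rotMap, coords_rotMap, coords_rotMap,
    su2_bracket b h12 h23 h31 x y, coords_su2vec]
  exact (cross3_rot_identity w _ _ hw).symm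

/-- rotation by π about axis `w`, as a Lie algebra automorphism of `su(2)`. -/
noncomputable def rotLieEquiv (w : Fin 3 → ℝ) (hw : w ⬝ᵥ w ≠ 0) : L ≃ₗ⁅ℝ⁆ L :=
  { rotMap b w with
    map_lie' := by intro x y; exact rotMap_lie b h12 h23 h31 w hw x y
    invFun := rotMap b w
    left_inv := rotMap_invol b w hw
    right_inv := rotMap_invol b w hw }

lemma rotLieEquiv_apply (w : Fin 3 → ℝ) (hw : w ⬝ᵥ w ≠ 0) (x : L) :
    rotLieEquiv b h12 h23 h31 w hw x = rotMap b w x := rfl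

end su2

open Matrix Module

section su2classify

variable {L : Type*} [LieRing L] [LieAlgebra ℝ L]
variable (b : Basis (Fin 3) ℝ L)
variable (h12 : ⁅b 0, b 1⁆ = b 2) (h23 : ⁅b 1, b 2⁆ = b 0) (h31 : ⁅b 2, b 0⁆ = b 1)

include h12 h23 h31 in
/-- The coadjoint representation of `su(2)` has no invariant line. -/
lemma su2_no_invariant_line (α : Module.Dual ℝ L) (hα : α ≠ 0)
    (h : ∀ i : Fin 3, ∃ t : ℝ, ⁅b i, α⁆ = t • α) : False := by
  obtain ⟨t0, ht0⟩ := h 0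
  obtain ⟨t1, ht1⟩ := h 1
  obtain ⟨t2, ht2⟩ := h 2
  have h21 : ⁅b 1, b 0⁆ = -b 2 := by rw [← lie_skew, h12]
  have h32 : ⁅b 2, b 1⁆ = -b 0 := by rw [← lie_skew, h23]
  have h13 : ⁅b 0, b 2⁆ = -b 1 := by rw [← lie_skew, h31]
  have e01 : -α (b 2) = t0 * α (b 1) := by
    have := LinearMap.congr_fun ht0 (b 1)
    simpa [Module.Dual.lie_apply, h12] using this
  have e02 : α (b 1) = t0 * α (b 2) := by
    have := LinearMap.congr_fun ht0 (b 2)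
    simpa [Module.Dual.lie_apply, h13] using this
  have e12 : -α (b 0) = t1 * α (b 2) := by
    have := LinearMap.congr_fun ht1 (b 2)
    simpa [Module.Dual.lie_apply, h23] using this
  have hsum : α (b 1) * α (b 1) + α (b 2) * α (b 2) = 0 := by
    linear_combination e02 * α (b 1) - e01 * α (b 2)
  have ha1 : α (b 1) = 0 := by
    have h1 : α (b 1) * α (b 1) ≤ 0 := by linarith [mul_self_nonneg (α (b 2))]
    exact mul_self_eq_zero.mp (le_antisymm h1 (mul_self_nonneg _))
  have ha2 : α (b 2) = 0 := by
    have h2 : α (b 2) * α (b 2) ≤ 0 := by linarith [mul_self_nonneg (α (b 1))]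
    exact mul_self_eq_zero.mp (le_antisymm h2 (mul_self_nonneg _))
  have ha0 : α (b 0) = 0 := by rw [ha2] at e12; linarith [e12]
  apply hα
  apply b.ext
  intro i
  fin_cases i
  · simpa using ha0
  · simpa using ha1
  · simpa using ha2

include h12 h23 h31 in
/-- `su(2)` has no 2-dimensional Lie subalgebra. -/
lemma su2_no_two_dim_subalgebra (P : Submodule ℝ L)
    (hclosed : ∀ x ∈ P, ∀ y ∈ P, ⁅x, y⁆ ∈ P)
    (hP : Module.finrank ℝ P = 2) : False := by
  haveI : FiniteDimensional ℝ L := Module.Finite.of_basis b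
  let e : Basis (Fin 2) ℝ P := Module.finBasisOfFinrankEq ℝ P hP
  set x : L := (e 0 : L) with hxdef
  set y : L := (e 1 : L) with hydef
  have hxP : x ∈ P := (e 0).2
  have hyP : y ∈ P := (e 1).2
  have hzP : ⁅x, y⁆ ∈ P := hclosed x hxP y hyP
  -- coordinates
  set cx := b.equivFun x with hcx
  set cy := b.equivFun y with hcy
  -- linear independence of the coordinate vectors
  have hli0 : LinearIndependent ℝ (fun i : Fin 2 => (e i : L)) :=
    e.linearIndependent.map' P.subtype P.ker_subtype
  have hli1 : LinearIndependent ℝ (fun i : Fin 2 => b.equivFun (e i : L)) :=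
    hli0.map' b.equivFun.toLinearMap b.equivFun.ker
  have hm : ![cx, cy] = fun i : Fin 2 => b.equivFun (e i : L) := by
    funext i; fin_cases i <;> rfl
  have hcross_ne : cx ⨯₃ cy ≠ 0 :=
    crossProduct_ne_zero_iff_linearIndependent.mpr (hm ▸ hli1)
  -- z decomposes over x and y
  obtain ⟨r0, r1, hr⟩ : ∃ r0 r1 : ℝ, ⁅x, y⁆ = r0 • x + r1 • y := by
    have := e.sum_repr ⟨⁅x, y⁆, hzP⟩
    rw [Fin.sum_univ_two] at this
    exact ⟨_, _, by rw [← Subtype.coe_inj] at this; exact this.symm⟩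
  -- coordinates of z
  have hcz : b.equivFun ⁅x, y⁆ = cx ⨯₃ cy := by
    rw [su2_bracket b h12 h23 h31 x y, coords_su2vec]
  have hcz' : (cx ⨯₃ cy : Fin 3 → ℝ) = r0 • cx + r1 • cy := by
    rw [← hcz, hr, map_add, _root_.map_smul, _root_.map_smul]
  have hdot : (cx ⨯₃ cy) ⬝ᵥ (cx ⨯₃ cy) = 0 := by
    nth_rewrite 2 [hcz']
    rw [dotProduct_add, dotProduct_smul, dotProduct_smul,
      dotProduct_comm _ cx, dotProduct_comm _ cy,
      dot_self_cross, dot_cross_self]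
    simp
  exact hcross_ne (dot3_self_eq_zero hdot)

end su2classify

section mainproof

open Matrix Module

/-- The bracket of the T*-extension, explicitly. -/
lemma tstar_bracket {L : Type*} [LieRing L] [LieAlgebra ℝ L]
    (x y : L × Module.Dual ℝ L) :
    ⁅x, y⁆ = (⁅x.1, y.1⁆, ⁅x.1, y.2⁆ - ⁅y.1, x.2⁆) := rfl

lemma tstarAut_apply {L : Type*} [LieRing L] [LieAlgebra ℝ L] (F : L ≃ₗ⁅ℝ⁆ L)
    (z : L × Module.Dual ℝ L) :
    tstarAut F z = (F z.1, F.symm.toLinearEquiv.toLinearMap.dualMap z.2) := rfl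

lemma map_tstarAut_prod {L : Type*} [LieRing L] [LieAlgebra ℝ L] (F : L ≃ₗ⁅ℝ⁆ L)
    (p : Submodule ℝ L) :
    Submodule.map (tstarAut F) (p.prod (⊤ : Submodule ℝ (Module.Dual ℝ L))) =
      (p.map F.toLinearEquiv.toLinearMap).prod ⊤ := by
  ext z
  constructor
  · rintro ⟨⟨u, a⟩, hm, rfl⟩
    rw [Submodule.mem_prod]
    exact ⟨⟨u, (Submodule.mem_prod.mp hm).1, rfl⟩, trivial⟩
  · intro hz
    obtain ⟨u, hu, hz1⟩ := (Submodule.mem_prod.mp hz).1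
    refine ⟨(u, F.toLinearEquiv.toLinearMap.dualMap z.2), Submodule.mem_prod.mpr ⟨hu, trivial⟩, ?_⟩
    rw [tstarAut_apply]
    refine Prod.ext hz1 ?_
    ext m
    simp [LinearMap.dualMap_apply]

/-- Every 4-dimensional Lie subalgebra of `T*su(2)` that is degenerate with respect to the
canonical bilinear form can be mapped, by `T*F` for some automorphism `F` of `su(2)`, onto
`ℝe₁ ⊕ su(2)*`. -/
theorem tstar_su2_four_dim_degenerate_subalgebra
    {L : Type*} [LieRing L] [LieAlgebra ℝ L]
    (b : Module.Basis (Fin 3) ℝ L)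
    (h12 : ⁅b 0, b 1⁆ = b 2) (h23 : ⁅b 1, b 2⁆ = b 0) (h31 : ⁅b 2, b 0⁆ = b 1)
    (H : LieSubalgebra ℝ (L × Module.Dual ℝ L))
    (hdim : Module.finrank ℝ H = 4)
    (hdeg : ∃ x ∈ H, x ≠ 0 ∧ ∀ y ∈ H, tstarForm x y = 0) :
    ∃ F : L ≃ₗ⁅ℝ⁆ L,
      Submodule.map (tstarAut F) H.toSubmodule =
        (Submodule.span ℝ {b 0}).prod (⊤ : Submodule ℝ (Module.Dual ℝ L)) := by
  clear hdeg
  classical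
  haveI : FiniteDimensional ℝ L := Module.Finite.of_basis b
  have hL3 : Module.finrank ℝ L = 3 := by
    rw [Module.finrank_eq_card_basis b]; simp
  have hD3 : Module.finrank ℝ (Module.Dual ℝ L) = 3 := by
    rw [Subspace.dual_finrank_eq, hL3]
  set P : Submodule ℝ L :=
    Submodule.map (LinearMap.fst ℝ L (Module.Dual ℝ L)) H.toSubmodule with hPdef
  set K : Submodule ℝ (Module.Dual ℝ L) :=
    Submodule.comap (LinearMap.inr ℝ L (Module.Dual ℝ L)) H.toSubmodule with hKdef
  set φ : H.toSubmodule →ₗ[ℝ] L :=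
    (LinearMap.fst ℝ L (Module.Dual ℝ L)).comp H.toSubmodule.subtype with hφ
  have hrange : LinearMap.range φ = P := by
    rw [hφ, LinearMap.range_comp, Submodule.range_subtype]
  have hkerK : (LinearMap.ker φ) ≃ₗ[ℝ] K := by
    refine
      { toFun := fun x => ⟨(x : H.toSubmodule).1.2, ?_⟩
        map_add' := fun x y => rfl
        map_smul' := fun t x => rfl
        invFun := fun a => ⟨⟨((0 : L), (a : Module.Dual ℝ L)), a.2⟩, ?_⟩
        left_inv := ?_
        right_inv := ?_ }
    · have hx0 : ((x : H.toSubmodule) : L × Module.Dual ℝ L).1 = 0 := x.2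
      have hmem := (x : H.toSubmodule).2
      have heq : ((x : H.toSubmodule) : L × Module.Dual ℝ L)
          = ((0 : L), ((x : H.toSubmodule) : L × Module.Dual ℝ L).2) := Prod.ext hx0 rfl
      show ((0 : L), ((x : H.toSubmodule) : L × Module.Dual ℝ L).2) ∈ H.toSubmodule
      rw [← heq]; exact hmem
    · exact rfl
    · intro x
      apply Subtype.ext; apply Subtype.ext
      have hx0 : ((x : H.toSubmodule) : L × Module.Dual ℝ L).1 = 0 := x.2
      exact Prod.ext hx0.symm rfl
    · intro a; rfl
  have hsum : Module.finrank ℝ P + Module.finrank ℝ K = 4 := by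
    have h1 := LinearMap.finrank_range_add_finrank_ker φ
    have hKex : Module.finrank ℝ (LinearMap.ker φ) = Module.finrank ℝ K :=
      LinearEquiv.finrank_eq hkerK
    rw [hrange, hKex] at h1
    rwa [(show Module.finrank ℝ H.toSubmodule = 4 from hdim)] at h1
  have hKle : Module.finrank ℝ K ≤ 3 := hD3 ▸ K.finrank_le
  have hPle : Module.finrank ℝ P ≤ 3 := hL3 ▸ P.finrank_le
  -- P is closed under the bracket
  have hPclosed : ∀ x ∈ P, ∀ y ∈ P, ⁅x, y⁆ ∈ P := by
    rintro x ⟨z1, hz1, rfl⟩ y ⟨z2, hz2, rfl⟩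
    exact ⟨⁅z1, z2⁆, H.lie_mem hz1 hz2, rfl⟩
  have hKcases : Module.finrank ℝ K = 1 ∨ Module.finrank ℝ K = 2 ∨ Module.finrank ℝ K = 3 := by
    omega
  rcases hKcases with hK1 | hK2 | hK3
  · -- K is an invariant line of the coadjoint representation: impossible
    exfalso
    have hP3 : Module.finrank ℝ P = 3 := by omega
    have hPtop : P = ⊤ := Submodule.eq_top_of_finrank_eq (by rw [hP3, hL3])
    obtain ⟨α, hαK, hα0⟩ : ∃ α ∈ K, α ≠ (0 : Module.Dual ℝ L) := by
      by_contra hc; push_neg at hc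
      have hbot : K = ⊥ := (Submodule.eq_bot_iff K).mpr hc
      rw [hbot, finrank_bot] at hK1; omega
    have hspan : Submodule.span ℝ {α} = K := by
      apply Submodule.eq_of_le_of_finrank_le
        (Submodule.span_le.mpr (Set.singleton_subset_iff.mpr hαK))
      rw [hK1, finrank_span_singleton hα0]
    apply su2_no_invariant_line b h12 h23 h31 α hα0
    intro i
    have hbi : b i ∈ P := hPtop ▸ Submodule.mem_top
    obtain ⟨z, hzH, hz1⟩ := hbi
    have hαH : ((0 : L), α) ∈ H.toSubmodule := hαK
    have hlie : (⁅z, ((0 : L), α)⁆ : L × Module.Dual ℝ L) ∈ H.toSubmodule :=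
      H.lie_mem hzH hαH
    have heq : (⁅z, ((0 : L), α)⁆ : L × Module.Dual ℝ L) = ((0 : L), ⁅b i, α⁆) := by
      rw [tstar_bracket]
      refine Prod.ext ?_ ?_
      · show ⁅z.1, (0 : L)⁆ = 0; simp
      · show ⁅z.1, α⁆ - ⁅(0 : L), z.2⁆ = ⁅b i, α⁆
        rw [← hz1]; simp
    rw [heq] at hlie
    have hmemK : ⁅b i, α⁆ ∈ K := hlie
    rw [← hspan] at hmemK
    obtain ⟨t, ht⟩ := Submodule.mem_span_singleton.mp hmemK
    exact ⟨t, ht.symm⟩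
  · -- P would be a 2-dimensional subalgebra of su(2): impossible
    exfalso
    exact su2_no_two_dim_subalgebra b h12 h23 h31 P hPclosed (by omega)
  · -- the generic case: K = su(2)*, P = ℝv
    have hKtop : K = ⊤ := Submodule.eq_top_of_finrank_eq (by rw [hK3, hD3])
    have hP1 : Module.finrank ℝ P = 1 := by omega
    obtain ⟨v, hvP, hv0⟩ : ∃ v ∈ P, v ≠ (0 : L) := by
      by_contra hc; push_neg at hc
      have hbot : P = ⊥ := (Submodule.eq_bot_iff P).mpr hc
      rw [hbot, finrank_bot] at hP1; omega
    have hvspan : Submodule.span ℝ {v} = P :=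
      Submodule.eq_of_le_of_finrank_le
        (Submodule.span_le.mpr (Set.singleton_subset_iff.mpr hvP))
        (by rw [hP1, finrank_span_singleton hv0])
    -- H = ℝv ⊕ su(2)*
    have hHeq : H.toSubmodule = (Submodule.span ℝ {v}).prod ⊤ := by
      apply le_antisymm
      · intro z hz
        rw [Submodule.mem_prod, hvspan]
        exact ⟨⟨z, hz, rfl⟩, trivial⟩
      · obtain ⟨z, hzH, hz1⟩ := hvP
        have hz2H : ((0 : L), z.2) ∈ H.toSubmodule := by
          have : z.2 ∈ K := hKtop ▸ Submodule.mem_top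
          exact this
        have hv0H : (v, (0 : Module.Dual ℝ L)) ∈ H.toSubmodule := by
          have hsub := H.toSubmodule.sub_mem hzH hz2H
          have : z - ((0 : L), z.2) = (v, (0 : Module.Dual ℝ L)) := by
            refine Prod.ext ?_ ?_
            · show z.1 - 0 = v; rw [sub_zero]; exact hz1
            · show z.2 - z.2 = 0; rw [sub_self]
          rwa [this] at hsub
        intro z hz
        rw [Submodule.mem_prod] at hz
        obtain ⟨t, ht⟩ := Submodule.mem_span_singleton.mp hz.1
        have hzdec : z = t • (v, (0 : Module.Dual ℝ L)) + ((0 : L), z.2) := by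
          refine Prod.ext ?_ ?_
          · show z.1 = t • v + 0; rw [add_zero]; exact ht.symm
          · show z.2 = t • (0 : Module.Dual ℝ L) + z.2; rw [smul_zero, zero_add]
        rw [hzdec]
        refine H.toSubmodule.add_mem (H.toSubmodule.smul_mem t hv0H) ?_
        have : z.2 ∈ K := hKtop ▸ Submodule.mem_top
        exact this
    rw [hHeq]
    by_cases hvb : v ∈ Submodule.span ℝ {b 0}
    · -- v is already on the axis ℝ b 0
      refine ⟨LieEquiv.refl, ?_⟩
      have hid : tstarAut (LieEquiv.refl : L ≃ₗ⁅ℝ⁆ L) = LinearMap.id :=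
        LinearMap.ext fun z => rfl
      rw [hid, Submodule.map_id]
      obtain ⟨t, ht⟩ := Submodule.mem_span_singleton.mp hvb
      have ht0 : t ≠ 0 := by
        rintro rfl; rw [zero_smul] at ht; exact hv0 ht.symm
      congr 1
      rw [← ht]
      exact Submodule.span_singleton_smul_eq (IsUnit.mk0 t ht0) _
    · -- rotate v onto the axis ℝ b 0
      set cv : Fin 3 → ℝ := b.equivFun v with hcv
      have hcv0 : cv ≠ 0 := by
        intro hc
        apply hv0
        rw [← su2vec_coords b v, ← hcv, hc]
        simp [su2vec]
      have hdotne : cv ⬝ᵥ cv ≠ 0 := fun hd => hcv0 (dot3_self_eq_zero hd)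
      have hdotnn : 0 ≤ cv ⬝ᵥ cv := by
        rw [dotProduct, Fin.sum_univ_three]
        nlinarith [mul_self_nonneg (cv 0), mul_self_nonneg (cv 1), mul_self_nonneg (cv 2)]
      set n : ℝ := Real.sqrt (cv ⬝ᵥ cv) with hn
      have hn2 : n * n = cv ⬝ᵥ cv := Real.mul_self_sqrt hdotnn
      have hnne : n ≠ 0 := by
        intro h; rw [h, zero_mul] at hn2; exact hdotne hn2.symm
      have hb0c : b.equivFun (b 0) = ![1, 0, 0] := by
        have hb0 : (b 0 : L) = su2vec b ![1, 0, 0] := by simp [su2vec]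
        rw [hb0, coords_su2vec]
      set w : Fin 3 → ℝ := cv - n • ![1, 0, 0] with hwdef
      have hwne : w ≠ 0 := by
        intro hw
        apply hvb
        have hcveq : cv = n • ![1, 0, 0] := by
          rw [hwdef, sub_eq_zero] at hw; exact hw
        have hveq : v = n • b 0 := by
          rw [← su2vec_coords b v, ← hcv, hcveq]
          simp [su2vec]
        rw [hveq]
        exact Submodule.smul_mem _ _ (Submodule.mem_span_singleton_self _)
      have hww : w ⬝ᵥ w ≠ 0 := fun hd => hwne (dot3_self_eq_zero hd)
      refine ⟨rotLieEquiv b h12 h23 h31 w hww, ?_⟩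
      rw [map_tstarAut_prod]
      have hkey : w ⬝ᵥ w = 2 * (cv ⬝ᵥ w) := by
        have hn2' : n * n = cv 0 * cv 0 + cv 1 * cv 1 + cv 2 * cv 2 := by
          rw [hn2, dotProduct, Fin.sum_univ_three]
        simp only [hwdef, dotProduct, Fin.sum_univ_three, Pi.sub_apply, Pi.smul_apply,
          smul_eq_mul, Matrix.cons_val_zero, Matrix.cons_val_one, Matrix.head_cons,
          Matrix.cons_val_two, Matrix.tail_cons]
        linear_combination hn2'
      have hcvw : cv ⬝ᵥ w ≠ 0 := by
        intro h; rw [hkey, h, mul_zero] at hww; exact hww rfl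
      have hcoef : 2 / (w ⬝ᵥ w) * (cv ⬝ᵥ w) = 1 := by
        rw [hkey]
        have h := hcvw
        generalize hX : cv ⬝ᵥ w = X at h ⊢
        field_simp
      have hFv : rotMap b w v = (-n) • b 0 := by
        apply b.equivFun.injective
        rw [coords_rotMap, ← hcv, hcoef, one_smul, _root_.map_smul, hb0c, hwdef]
        module
      have himg :
          Submodule.map (rotLieEquiv b h12 h23 h31 w hww).toLinearEquiv.toLinearMap
              (Submodule.span ℝ {v}) = Submodule.span ℝ {b 0} := by
        rw [Submodule.map_span, Set.image_singleton]
        have happ : (rotLieEquiv b h12 h23 h31 w hww).toLinearEquiv.toLinearMap v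
            = rotMap b w v := rfl
        rw [happ, hFv]
        exact Submodule.span_singleton_smul_eq (IsUnit.mk0 (-n) (neg_ne_zero.mpr hnne)) _
      rw [himg]
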